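/- arXiv:2501.00285 — 3 statements merged into one kernel-verified Lean document; each statement's English description precedes it below -/
import Mathlib

section
/- The injective partial Catalan monoid IC_n is abundant: every L*-class of IC_n contains an idempotent and every R*-class of IC_n contains an idempotent. -/
open scoped Classical

namespace ICCatalan

/-- Partial injective transformations on `Fin n` (representing the chain `[n] = {1,…,n}`). -/
abbrev PT (n : ℕ) := Fin n ≃. Fin n

/-- Composition (left-to-right, `x(αβ) = (xα)β`) makes `PT n` a monoid. -/
noncomputable instance instMonoidPT (n : ℕ) : Monoid (PT n) where
  mul f g := f.trans g
  one := PEquiv.refl (Fin n)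
  mul_assoc := PEquiv.trans_assoc
  one_mul := PEquiv.refl_trans
  mul_one := PEquiv.trans_refl

lemma mul_def {n : ℕ} (f g : PT n) : f * g = f.trans g := rfl

/-- The domain of a partial transformation. -/
def pdom {n : ℕ} (f : PT n) : Set (Fin n) := {x | ∃ y, f x = some y}

/-- The image of a partial transformation. -/
def pim {n : ℕ} (f : PT n) : Set (Fin n) := {y | ∃ x, f x = some y}

/-- The height `|im f|` of a partial transformation. -/
noncomputable def height {n : ℕ} (f : PT n) : ℕ := (pim f).ncard

/-- `f` is order-decreasing: `xf ≤ x` on the domain. -/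
def IsDecr {n : ℕ} (f : PT n) : Prop := ∀ x y : Fin n, f x = some y → y ≤ x

/-- `f` is isotone: `x ≤ y` implies `xf ≤ yf` on the domain. -/
def IsIso {n : ℕ} (f : PT n) : Prop :=
  ∀ x₁ x₂ y₁ y₂ : Fin n, f x₁ = some y₁ → f x₂ = some y₂ → x₁ ≤ x₂ → y₁ ≤ y₂

/-- The injective partial Catalan monoid `IC_n`: all isotone order-decreasing
partial injective transformations of `[n]`. -/
def IC (n : ℕ) : Set (PT n) := {f | IsIso f ∧ IsDecr f}

/-- `Q'_n = {α ∈ IC_n : 1 ∉ dom α}` (the least element of `Fin n` plays the role of `1 ∈ [n]`). -/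
def Qp (n : ℕ) : Set (PT n) := {f | f ∈ IC n ∧ ∀ x : Fin n, (x : ℕ) = 0 → f x = none}

/-- `S¹ : S` with an identity adjoined (realized inside `PT n`). -/
def SOne {n : ℕ} (S : Set (PT n)) : Set (PT n) := S ∪ {1}

/-- The starred Green relation `L*` of the subsemigroup `S`. -/
def LStar {n : ℕ} (S : Set (PT n)) (a b : PT n) : Prop :=
  ∀ x ∈ SOne S, ∀ y ∈ SOne S, (a * x = a * y ↔ b * x = b * y)

/-- The starred Green relation `R*` of the subsemigroup `S`. -/
def RStar {n : ℕ} (S : Set (PT n)) (a b : PT n) : Prop :=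
  ∀ x ∈ SOne S, ∀ y ∈ SOne S, (x * a = y * a ↔ x * b = y * b)

/-- The starred Green relation `H* = L* ∩ R*`. -/
def HStar {n : ℕ} (S : Set (PT n)) (a b : PT n) : Prop :=
  LStar S a b ∧ RStar S a b

/-- The partial identity on a subset `A` of `[n]`. -/
noncomputable def pid {n : ℕ} (A : Set (Fin n)) : PT n := PEquiv.ofSet A

/-- An essential element: exactly one point `y` of the domain is moved, and `yf = y - 1`. -/
def IsEssential {n : ℕ} (f : PT n) : Prop :=
  ∃ y z : Fin n, f y = some z ∧ (z : ℕ) + 1 = (y : ℕ) ∧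
    ∀ x w : Fin n, f x = some w → w ≠ x → x = y

/-- The shift of `f`: the number of non-fixed points of its domain. -/
noncomputable def shift {n : ℕ} (f : PT n) : ℕ := {x : Fin n | ∃ w, f x = some w ∧ w ≠ x}.ncard



lemma trans_apply' {n : ℕ} (f g : PT n) (x : Fin n) : (f.trans g) x = (f x).bind g := rfl

lemma pid_apply_mem {n : ℕ} {A : Set (Fin n)} {x : Fin n} (hx : x ∈ A) :
    pid A x = some x := PEquiv.ofSet_eq_some_iff.2 ⟨rfl, hx⟩

lemma pid_apply_not_mem {n : ℕ} {A : Set (Fin n)} {x : Fin n} (hx : x ∉ A) :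
    pid A x = none := by
  rw [Option.eq_none_iff_forall_not_mem]
  intro b hb
  rw [Option.mem_def, pid, PEquiv.ofSet_eq_some_iff] at hb
  obtain ⟨rfl, h2⟩ := hb
  exact hx h2

lemma pid_mem_IC {n : ℕ} (A : Set (Fin n)) : pid A ∈ IC n := by
  constructor
  · intro x₁ x₂ y₁ y₂ h1 h2 hle
    rw [pid, PEquiv.ofSet_eq_some_iff] at h1 h2
    rw [h1.1, h2.1]; exact hle
  · intro x y h
    rw [pid, PEquiv.ofSet_eq_some_iff] at h
    rw [h.1]

lemma pid_idem {n : ℕ} (A : Set (Fin n)) : pid A * pid A = pid A := by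
  apply PEquiv.ext
  intro x
  rw [mul_def, trans_apply']
  by_cases hx : x ∈ A
  · rw [pid_apply_mem hx, Option.bind_some, pid_apply_mem hx]
  · rw [pid_apply_not_mem hx, Option.bind_none]

lemma pid_pdom {n : ℕ} (a : PT n) : pid (pdom a) = a * a.symm := by
  apply PEquiv.ext
  intro p
  rw [mul_def, trans_apply']
  cases hp : a p with
  | none =>
    rw [Option.bind_none, pid_apply_not_mem]
    rintro ⟨r, hr⟩
    rw [hp] at hr
    exact nomatch hr
  | some r =>
    rw [Option.bind_some, (PEquiv.eq_some_iff a).2 hp,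
      pid_apply_mem (show p ∈ pdom a from ⟨r, hp⟩)]

lemma pid_pim {n : ℕ} (a : PT n) : pid (pim a) = a.symm * a := by
  apply PEquiv.ext
  intro p
  rw [mul_def, trans_apply']
  by_cases hp : p ∈ pim a
  · obtain ⟨q, hq⟩ := hp
    rw [pid_apply_mem (show p ∈ pim a from ⟨q, hq⟩),
      (PEquiv.eq_some_iff a).2 hq, Option.bind_some, hq]
  · have hs : a.symm p = none := by
      rw [Option.eq_none_iff_forall_not_mem]
      intro q hq
      rw [Option.mem_def, PEquiv.eq_some_iff] at hq
      exact hp ⟨q, hq⟩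
    rw [hs, Option.bind_none, pid_apply_not_mem hp]

lemma absorb_left {n : ℕ} (a : PT n) : pid (pdom a) * a = a := by
  apply PEquiv.ext
  intro p
  rw [mul_def, trans_apply']
  cases hp : a p with
  | none =>
    rw [pid_apply_not_mem (show p ∉ pdom a from ?_), Option.bind_none]
    rintro ⟨r, hr⟩
    rw [hp] at hr; exact nomatch hr
  | some r =>
    rw [pid_apply_mem (show p ∈ pdom a from ⟨r, hp⟩), Option.bind_some, hp]

lemma absorb_right {n : ℕ} (a : PT n) : a * pid (pim a) = a := by
  apply PEquiv.ext
  intro p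
  rw [mul_def, trans_apply']
  cases hp : a p with
  | none => rw [Option.bind_none]
  | some r =>
    rw [Option.bind_some, pid_apply_mem (show r ∈ pim a from ⟨p, hp⟩)]

lemma lstar_key {n : ℕ} (a : PT n) {x y : PT n}
    (h : a * x = a * y) : pid (pim a) * x = pid (pim a) * y := by
  rw [pid_pim, mul_assoc, mul_assoc, h]

lemma lstar_key' {n : ℕ} (a : PT n) {x y : PT n}
    (h : pid (pim a) * x = pid (pim a) * y) : a * x = a * y := by
  conv_lhs => rw [← absorb_right a, mul_assoc, h, ← mul_assoc, absorb_right a]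

lemma rstar_key {n : ℕ} (a : PT n) {x y : PT n}
    (h : x * a = y * a) : x * pid (pdom a) = y * pid (pdom a) := by
  rw [pid_pdom, ← mul_assoc, ← mul_assoc, h]

lemma rstar_key' {n : ℕ} (a : PT n) {x y : PT n}
    (h : x * pid (pdom a) = y * pid (pdom a)) : x * a = y * a := by
  conv_lhs => rw [← absorb_left a, ← mul_assoc, h, mul_assoc, absorb_left a]

/-- `IC_n` is abundant: every `L*`-class and every `R*`-class of `IC_n`
contains an idempotent. -/
theorem stmt2 (n : ℕ) (hn : 0 < n) :
    ∀ a ∈ IC n,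
      (∃ e ∈ IC n, e * e = e ∧ LStar (IC n) a e) ∧
      (∃ e ∈ IC n, e * e = e ∧ RStar (IC n) a e) := by
  intro a _ha
  constructor
  · exact ⟨pid (pim a), pid_mem_IC _, pid_idem _,
      fun x _ y _ => ⟨lstar_key a, lstar_key' a⟩⟩
  · exact ⟨pid (pdom a), pid_mem_IC _, pid_idem _,
      fun x _ y _ => ⟨rstar_key a, rstar_key' a⟩⟩

end ICCatalan
end

section
/- The monoid IC_n is ample: for every α ∈ IC_n and every idempotent ε ∈ IC_n, one has εα = α·ε_{im(εα)} and αε = ε_{dom(αε)}·α, where for A ⊆ [n], ε_A denotes the partial identity with domain A (which is an idempotent of IC_n and the unique idempotent L*-related, respectively R*-related, to a given element with image, respectively domain, equal to A). -/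
open scoped Classical

namespace ICCatalan

/- ### auxiliary lemmas -/

lemma mul_apply {n : ℕ} (f g : PT n) (x : Fin n) : (f * g) x = (f x).bind g := rfl

lemma pid_apply {n : ℕ} (A : Set (Fin n)) (x : Fin n) :
    pid A x = if x ∈ A then some x else none := by
  unfold pid PEquiv.ofSet
  split_ifs with h <;> simp [h]

lemma pid_mem {n : ℕ} {A : Set (Fin n)} {x : Fin n} (h : x ∈ A) : pid A x = some x := by
  rw [pid_apply, if_pos h]

lemma pid_not_mem {n : ℕ} {A : Set (Fin n)} {x : Fin n} (h : x ∉ A) : pid A x = none := by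
  rw [pid_apply, if_neg h]

lemma pinj {n : ℕ} {f : PT n} {x₁ x₂ y : Fin n} (h1 : f x₁ = some y) (h2 : f x₂ = some y) :
    x₁ = x₂ := by
  have e1 : f.symm y = some x₁ := (PEquiv.mem_iff_mem f).2 h1
  have e2 : f.symm y = some x₂ := (PEquiv.mem_iff_mem f).2 h2
  rw [e1] at e2; exact (Option.some_inj.mp e2)

lemma pim_pid {n : ℕ} (A : Set (Fin n)) : pim (pid A) = A := by
  ext z; constructor
  · rintro ⟨x, hx⟩
    rw [pid_apply] at hx
    by_cases h : x ∈ A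
    · rw [if_pos h] at hx; obtain rfl := Option.some_inj.mp hx; exact h
    · rw [if_neg h] at hx; exact absurd hx (by simp)
  · intro h; exact ⟨z, pid_mem h⟩

lemma pdom_pid {n : ℕ} (A : Set (Fin n)) : pdom (pid A) = A := by
  ext z; constructor
  · rintro ⟨y, hy⟩
    rw [pid_apply] at hy
    by_cases h : z ∈ A
    · exact h
    · rw [if_neg h] at hy; exact absurd hy (by simp)
  · intro h; exact ⟨z, pid_mem h⟩

/-- Idempotents of `PT n` are partial identities. -/
lemma idem_eq_pid {n : ℕ} {e : PT n} (he : e * e = e) : e = pid (pdom e) := by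
  have key : ∀ x y : Fin n, e x = some y → y = x := by
    intro x y hxy
    have h1 : (e * e) x = e x := by rw [he]
    rw [mul_apply, hxy] at h1
    simp only [Option.bind_some] at h1
    exact pinj h1 hxy
  apply PEquiv.ext; intro x
  cases hx : e x with
  | none =>
    rw [pid_not_mem]; rintro ⟨y, hy⟩; rw [hx] at hy; exact absurd hy (by simp)
  | some y =>
    rw [show y = x from key x y hx, pid_mem (show x ∈ pdom e from ⟨y, hx⟩)]

/-- Right-multiplication test: `f * x = f * y` iff `x` and `y` agree on `pim f`. -/
lemma mul_right_eq_iff {n : ℕ} (f x y : PT n) :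
    f * x = f * y ↔ ∀ z ∈ pim f, x z = y z := by
  constructor
  · rintro h z ⟨w, hw⟩
    have := congrArg (fun g : PT n => g w) h
    simpa [mul_apply, hw] using this
  · intro h
    apply PEquiv.ext; intro w
    rw [mul_apply, mul_apply]
    cases hw : f w with
    | none => rfl
    | some z => simpa using h z ⟨w, hw⟩

lemma pid_dom_mul {n : ℕ} (f : PT n) : pid (pdom f) * f = f := by
  apply PEquiv.ext; intro x
  rw [mul_apply, pid_apply]
  split_ifs with h
  · rfl
  · cases hx : f x with
    | none => rfl
    | some y => exact absurd ⟨y, hx⟩ h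

lemma mul_pid_im {n : ℕ} (f : PT n) : f * pid (pim f) = f := by
  apply PEquiv.ext; intro x
  rw [mul_apply]
  cases hx : f x with
  | none => rfl
  | some y => simp only [Option.bind_some]; exact pid_mem ⟨x, hx⟩

lemma mul_pid_mem {n : ℕ} (x : PT n) (A : Set (Fin n)) (w u : Fin n)
    (h : (x * pid A) w = some u) : u ∈ A := by
  rw [mul_apply] at h
  cases ht : x w with
  | none => rw [ht] at h; exact absurd h (by simp)
  | some t =>
    rw [ht] at h
    simp only [Option.bind_some] at h
    by_cases hm : t ∈ A
    · rw [pid_mem hm] at h; obtain rfl := Option.some_inj.mp h; exact hm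
    · rw [pid_not_mem hm] at h; exact absurd h (by simp)

lemma cancel_right {n : ℕ} {f a b : PT n}
    (ha : ∀ w u : Fin n, a w = some u → u ∈ pdom f)
    (hb : ∀ w u : Fin n, b w = some u → u ∈ pdom f)
    (h : a * f = b * f) : a = b := by
  apply PEquiv.ext; intro w
  have hw := congrArg (fun g : PT n => g w) h
  simp only [mul_apply] at hw
  cases hA : a w with
  | none =>
    cases hB : b w with
    | none => rfl
    | some u =>
      obtain ⟨v, hv⟩ := hb w u hB
      rw [hA, hB] at hw
      simp [hv] at hw
  | some u =>
    obtain ⟨v, hv⟩ := ha w u hA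
    rw [hA] at hw
    cases hB : b w with
    | none => rw [hB] at hw; simp [hv] at hw
    | some u' =>
      rw [hB] at hw
      obtain ⟨v', hv'⟩ := hb w u' hB
      simp only [Option.bind_some, hv, hv'] at hw
      obtain rfl := Option.some_inj.mp hw
      rw [pinj hv hv']

/-- Left-multiplication test. -/
lemma mul_left_eq_iff {n : ℕ} (f x y : PT n) :
    x * f = y * f ↔ x * pid (pdom f) = y * pid (pdom f) := by
  constructor
  · intro h
    refine cancel_right (f := f) (fun w u => mul_pid_mem x _ w u)
      (fun w u => mul_pid_mem y _ w u) ?_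
    rw [mul_assoc, pid_dom_mul, mul_assoc, pid_dom_mul]; exact h
  · intro h
    have h2 := congrArg (· * f) h
    simpa only [mul_assoc, pid_dom_mul] using h2

lemma mul_pid_mem_left {n : ℕ} (A : Set (Fin n)) (x : PT n) (w u : Fin n)
    (h : (pid A * x) w = some u) : w ∈ A := by
  rw [mul_apply, pid_apply] at h
  split_ifs at h with hm
  · exact hm
  · exact absurd h (by simp)

lemma one_mem_SOne {n : ℕ} (S : Set (PT n)) : (1 : PT n) ∈ SOne S := Or.inr rfl

lemma pid_mem_SOne {n : ℕ} (A : Set (Fin n)) : pid A ∈ SOne (IC n) := Or.inl (pid_mem_IC A)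

/-- Ample identity, left version: `ε_A α = α ε_{im(ε_A α)}`. -/
lemma ample_left {n : ℕ} (A : Set (Fin n)) (α : PT n) :
    pid A * α = α * pid (pim (pid A * α)) := by
  apply PEquiv.ext; intro x
  rw [mul_apply, mul_apply, pid_apply]
  split_ifs with h
  · simp only [Option.bind_some]
    cases hx : α x with
    | none => rfl
    | some y =>
      have hy : y ∈ pim (pid A * α) := ⟨x, by rw [mul_apply, pid_mem h]; exact hx⟩
      simp only [Option.bind_some]
      rw [pid_mem hy]
  · simp only [Option.bind_none]
    cases hx : α x with
    | none => rfl
    | some y =>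
      simp only [Option.bind_some]
      rw [pid_not_mem]
      rintro ⟨w, hw⟩
      rw [mul_apply, pid_apply] at hw
      split_ifs at hw with hw'
      · simp only [Option.bind_some] at hw
        exact h (pinj hw hx ▸ hw')
      · exact absurd hw (by simp)

/-- Ample identity, right version: `α ε_A = ε_{dom(α ε_A)} α`. -/
lemma ample_right {n : ℕ} (A : Set (Fin n)) (α : PT n) :
    α * pid A = pid (pdom (α * pid A)) * α := by
  apply PEquiv.ext; intro x
  rw [mul_apply, mul_apply, pid_apply]
  cases hx : α x with
  | none =>
    simp only [Option.bind_none]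
    split_ifs with h
    · obtain ⟨u, hu⟩ := h
      rw [mul_apply, hx] at hu
      exact absurd hu (by simp)
    · rfl
  | some y =>
    simp only [Option.bind_some]
    rw [pid_apply]
    split_ifs with hy hx' hx'
    · simp only [Option.bind_some]; exact hx.symm
    · exact absurd ⟨y, by rw [mul_apply, hx]; simp only [Option.bind_some]; exact pid_mem hy⟩ hx'
    · exfalso
      obtain ⟨u, hu⟩ := hx'
      rw [mul_apply, hx] at hu
      simp only [Option.bind_some] at hu
      by_cases h' : y ∈ A
      · exact hy h'
      · rw [pid_not_mem h'] at hu; exact absurd hu (by simp)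
    · rfl

/-- `IC_n` is ample.  For every `A ⊆ [n]` the partial identity `ε_A` is an
idempotent of `IC_n`; `ε_{im α}` (resp. `ε_{dom α}`) is the unique idempotent `L*`-related
(resp. `R*`-related) to `α`; and for all `α ∈ IC_n` and idempotents `ε ∈ IC_n`,
`εα = α·ε_{im(εα)}` and `αε = ε_{dom(αε)}·α`. -/
theorem stmt6 (n : ℕ) (hn : 0 < n) :
    (∀ A : Set (Fin n), pid A ∈ IC n ∧ pid A * pid A = pid A) ∧
    (∀ α ∈ IC n,
      (LStar (IC n) α (pid (pim α)) ∧
        ∀ e ∈ IC n, e * e = e → LStar (IC n) α e → e = pid (pim α)) ∧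
      (RStar (IC n) α (pid (pdom α)) ∧
        ∀ e ∈ IC n, e * e = e → RStar (IC n) α e → e = pid (pdom α))) ∧
    (∀ α ∈ IC n, ∀ ε ∈ IC n, ε * ε = ε →
      ε * α = α * pid (pim (ε * α)) ∧ α * ε = pid (pdom (α * ε)) * α) := by
  refine ⟨fun A => ⟨pid_mem_IC A, pid_idem A⟩, ?_, ?_⟩
  · intro α hα
    have hLuniv : ∀ x y : PT n, α * x = α * y ↔ pid (pim α) * x = pid (pim α) * y := by
      intro x y
      rw [mul_right_eq_iff, mul_right_eq_iff, pim_pid]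
    have hRuniv : ∀ x y : PT n, x * α = y * α ↔ x * pid (pdom α) = y * pid (pdom α) := by
      intro x y
      rw [mul_left_eq_iff, mul_left_eq_iff (pid (pdom α)), pdom_pid]
    refine ⟨⟨fun x _ y _ => hLuniv x y, ?_⟩, ⟨fun x _ y _ => hRuniv x y, ?_⟩⟩
    · -- uniqueness for L*
      intro e he hee hL
      have hed := idem_eq_pid hee
      have h1 : e * pid (pim α) = e := by
        have := (hL (pid (pim α)) (pid_mem_SOne _) 1 (one_mem_SOne _)).mp
          (by rw [mul_one, mul_pid_im])
        rwa [mul_one] at this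
      have h2 : α * e = α := by
        have := (hL e (Or.inl he) 1 (one_mem_SOne _)).mpr (by rw [mul_one, hee])
        rwa [mul_one] at this
      have hset : pdom e = pim α := by
        ext z
        constructor
        · intro hz
          have hez : e z = some z := by rw [hed]; exact pid_mem hz
          have : (e * pid (pim α)) z = some z := by rw [h1]; exact hez
          exact mul_pid_mem _ _ _ _ this
        · rintro ⟨w, hw⟩
          have h3 : (α * pid (pdom e)) w = some z := by rw [← hed, h2]; exact hw
          exact mul_pid_mem _ _ _ _ h3
      rw [hed, hset]
    · -- uniqueness for R*
      intro e he hee hR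
      have hed := idem_eq_pid hee
      have h1 : pid (pdom α) * e = e := by
        have := (hR (pid (pdom α)) (pid_mem_SOne _) 1 (one_mem_SOne _)).mp
          (by rw [one_mul, pid_dom_mul])
        rwa [one_mul] at this
      have h2 : e * α = α := by
        have := (hR e (Or.inl he) 1 (one_mem_SOne _)).mpr (by rw [one_mul, hee])
        rwa [one_mul] at this
      have hset : pdom e = pdom α := by
        ext z
        constructor
        · intro hz
          have hez : e z = some z := by rw [hed]; exact pid_mem hz
          have : (pid (pdom α) * e) z = some z := by rw [h1]; exact hez
          exact mul_pid_mem_left _ _ _ _ this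
        · rintro ⟨y, hy⟩
          have h3 : (pid (pdom e) * α) z = some y := by rw [← hed, h2]; exact hy
          exact mul_pid_mem_left _ _ _ _ h3
      rw [hed, hset]
  · intro α hα ε hε hεε
    have hed := idem_eq_pid hεε
    constructor
    · rw [hed]; exact ample_left _ _
    · rw [hed]; exact ample_right _ _

end ICCatalan
end

section
/- For 1 ≤ p ≤ n−1, the number of essential elements α ∈ IC_n with |im α| = p equals (n−1)·C(n−2, p−1), where C denotes the binomial coefficient. -/
open scoped Classical

namespace ICCatalan

def predF {n : ℕ} (y : Fin n) : Fin n := ⟨y.val - 1, lt_of_le_of_lt (Nat.sub_le _ _) y.isLt⟩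

lemma predF_val {n : ℕ} (y : Fin n) : (predF y).val = y.val - 1 := rfl

lemma predF_le {n : ℕ} (y : Fin n) : predF y ≤ y := by
  rw [Fin.le_def, predF_val]; exact Nat.sub_le _ _

lemma predF_ne {n : ℕ} {y : Fin n} (h : 0 < y.val) : predF y ≠ y := by
  intro hE
  have : (predF y).val = y.val := by rw [hE]
  simp [predF] at this; omega

noncomputable def essMap {n : ℕ} (y : Fin n) (A : Finset (Fin n)) : PT n where
  toFun x := if 0 < y.val ∧ y ∉ A ∧ predF y ∉ A ∧ x = y then some (predF y)
             else if x ∈ A then some x else none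
  invFun z := if 0 < y.val ∧ y ∉ A ∧ predF y ∉ A ∧ z = predF y then some y
              else if z ∈ A then some z else none
  inv a b := by
    split_ifs with h1 h2 h3 h4 h3 h4 <;>
      simp_all [eq_comm] <;> aesop

section
variable {n : ℕ} {y : Fin n} {A : Finset (Fin n)}
  (hy : 0 < y.val) (hyA : y ∉ A) (hpA : predF y ∉ A)

include hy hyA hpA

lemma essMap_eq_some_iff {x w : Fin n} :
    essMap y A x = some w ↔ (x = y ∧ w = predF y) ∨ (x ∈ A ∧ w = x) := by
  show (if _ then _ else _) = _ ↔ _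
  split_ifs with h1 h2
  · simp only [Option.some_inj]
    constructor
    · rintro rfl; exact Or.inl ⟨h1.2.2.2, rfl⟩
    · rintro (⟨_, rfl⟩ | ⟨hm, rfl⟩)
      · rfl
      · exact absurd (h1.2.2.2 ▸ hm) hyA
  · have hxy : x ≠ y := fun h => h1 ⟨hy, hyA, hpA, h⟩
    simp only [Option.some_inj]
    constructor
    · rintro rfl; exact Or.inr ⟨h2, rfl⟩
    · rintro (⟨rfl, _⟩ | ⟨_, rfl⟩)
      · exact absurd rfl hxy
      · rfl
  · constructor
    · intro h; cases h
    · rintro (⟨rfl, _⟩ | ⟨hm, _⟩)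
      · exact absurd ⟨hy, hyA, hpA, rfl⟩ h1
      · exact absurd hm h2

lemma essMap_apply_y : essMap y A y = some (predF y) := by
  rw [essMap_eq_some_iff hy hyA hpA]; tauto

lemma essMap_apply_mem {x : Fin n} (hx : x ∈ A) : essMap y A x = some x := by
  rw [essMap_eq_some_iff hy hyA hpA]; tauto

lemma essMap_pim : pim (essMap y A) = insert (predF y) (A : Set (Fin n)) := by
  ext w
  simp only [pim, Set.mem_setOf_eq, Set.mem_insert_iff, Finset.mem_coe]
  constructor
  · rintro ⟨x, hx⟩
    rw [essMap_eq_some_iff hy hyA hpA] at hx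
    rcases hx with ⟨_, rfl⟩ | ⟨h, rfl⟩ <;> tauto
  · rintro (rfl | h)
    · exact ⟨y, essMap_apply_y hy hyA hpA⟩
    · exact ⟨w, essMap_apply_mem hy hyA hpA h⟩

lemma essMap_height : height (essMap y A) = A.card + 1 := by
  rw [height, essMap_pim hy hyA hpA,
    Set.ncard_insert_of_notMem (by simpa using hpA) (A.finite_toSet),
    Set.ncard_coe_finset]

lemma essMap_mem_IC : essMap y A ∈ IC n := by
  constructor
  · intro x₁ x₂ w₁ w₂ h1 h2 hle
    rw [essMap_eq_some_iff hy hyA hpA] at h1 h2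
    rcases h1 with ⟨rfl, rfl⟩ | ⟨hm1, rfl⟩ <;> rcases h2 with ⟨rfl, rfl⟩ | ⟨hm2, rfl⟩
    · exact le_refl _
    · exact le_trans (predF_le _) hle
    · have hne : w₁ ≠ x₂ := fun h => hyA (h ▸ hm1)
      have h2 : w₁.val < x₂.val := lt_of_le_of_ne hle (fun h => hne (Fin.ext h))
      rw [Fin.le_def, predF_val]; omega
    · exact hle
  · intro x w h
    rw [essMap_eq_some_iff hy hyA hpA] at h
    rcases h with ⟨rfl, rfl⟩ | ⟨_, rfl⟩
    · exact predF_le _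
    · exact le_refl _

lemma essMap_essential : IsEssential (essMap y A) := by
  refine ⟨y, predF y, essMap_apply_y hy hyA hpA, by rw [predF_val]; omega, ?_⟩
  intro x w h hne
  rw [essMap_eq_some_iff hy hyA hpA] at h
  rcases h with ⟨rfl, _⟩ | ⟨_, rfl⟩
  · rfl
  · exact absurd rfl hne

end

/-- Any essential element of `IC n` is an `essMap`. -/
lemma essential_eq_essMap {n : ℕ} {f : PT n} (hf : f ∈ IC n) (he : IsEssential f) :
    ∃ y : Fin n, ∃ A : Finset (Fin n), 0 < y.val ∧ y ∉ A ∧ predF y ∉ A ∧ f = essMap y A := by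
  obtain ⟨y, z, hyz, hz1, huniq⟩ := he
  have hy : 0 < y.val := by omega
  have hzp : z = predF y := by
    apply Fin.ext; simp [predF]; omega
  set A : Finset (Fin n) := Finset.univ.filter (fun x => f x = some x) with hA
  have hyA : y ∉ A := by
    simp only [hA, Finset.mem_filter, Finset.mem_univ, true_and]
    intro h
    rw [hyz] at h
    have : z = y := by injection h
    rw [this] at hz1; omega
  have hpA : predF y ∉ A := by
    simp only [hA, Finset.mem_filter, Finset.mem_univ, true_and]
    intro h
    rw [← hzp] at h
    have := PEquiv.inj f (Option.mem_def.2 hyz) (Option.mem_def.2 h)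
    rw [← this] at hz1; omega
  refine ⟨y, A, hy, hyA, hpA, ?_⟩
  apply PEquiv.ext
  intro x
  rcases hx : f x with _ | w
  · rcases hx2 : essMap y A x with _ | w2
    · rfl
    · exfalso
      rw [essMap_eq_some_iff hy hyA hpA] at hx2
      rcases hx2 with ⟨rfl, _⟩ | ⟨hm, _⟩
      · rw [hyz] at hx; exact Option.some_ne_none _ hx
      · simp only [hA, Finset.mem_filter, Finset.mem_univ, true_and] at hm
        rw [hm] at hx; exact Option.some_ne_none _ hx
  · symm
    rw [essMap_eq_some_iff hy hyA hpA]
    by_cases hwx : w = x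
    · subst hwx
      right
      exact ⟨by simp [hA, hx], rfl⟩
    · have := huniq x w hx hwx
      subst this
      left
      have : w = z := by rw [hyz] at hx; injection hx with h; exact h.symm
      exact ⟨rfl, this.trans hzp⟩


/-- for `1 ≤ p ≤ n-1`, the number of essential elements of `IC_n` of
height `p` is `(n-1)·C(n-2, p-1)`. -/
theorem stmt12 (n p : ℕ) (hp1 : 1 ≤ p) (hpn : p ≤ n - 1) (hn : 0 < n) :
    {α : PT n | α ∈ IC n ∧ IsEssential α ∧ height α = p}.ncard =
      (n - 1) * Nat.choose (n - 2) (p - 1) := by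
  set T : Finset (Fin n × Finset (Fin n)) :=
    Finset.univ.filter (fun q => 0 < q.1.val ∧ q.1 ∉ q.2 ∧ predF q.1 ∉ q.2 ∧ q.2.card = p - 1)
    with hT
  have hST : {α : PT n | α ∈ IC n ∧ IsEssential α ∧ height α = p} =
      (fun q : Fin n × Finset (Fin n) => essMap q.1 q.2) '' ↑T := by
    ext f
    simp only [Set.mem_setOf_eq, Set.mem_image, Finset.mem_coe, hT, Finset.mem_filter,
      Finset.mem_univ, true_and, Prod.exists]
    constructor
    · rintro ⟨hIC, hess, hht⟩
      obtain ⟨y, A, hy, hyA, hpA, rfl⟩ := essential_eq_essMap hIC hess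
      refine ⟨y, A, ⟨hy, hyA, hpA, ?_⟩, rfl⟩
      rw [essMap_height hy hyA hpA] at hht; omega
    · rintro ⟨y, A, ⟨hy, hyA, hpA, hcard⟩, rfl⟩
      exact ⟨essMap_mem_IC hy hyA hpA, essMap_essential hy hyA hpA,
        by rw [essMap_height hy hyA hpA, hcard]; omega⟩
  have hinj : Set.InjOn (fun q : Fin n × Finset (Fin n) => essMap q.1 q.2) ↑T := by
    rintro ⟨y, A⟩ hq ⟨y', A'⟩ hq' heq
    simp only [hT, Finset.coe_filter, Set.mem_setOf_eq, Finset.mem_univ, true_and] at hq hq'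
    obtain ⟨hy, hyA, hpA, _⟩ := hq
    obtain ⟨hy', hyA', hpA', _⟩ := hq'
    simp only at heq
    have hyy : y = y' := by
      have h1 : essMap y' A' y = some (predF y) := by
        rw [← heq]; exact essMap_apply_y hy hyA hpA
      rw [essMap_eq_some_iff hy' hyA' hpA'] at h1
      rcases h1 with ⟨h, _⟩ | ⟨_, h⟩
      · exact h
      · exact absurd h (predF_ne hy)
    subst hyy
    have hAA : A = A' := by
      ext x
      constructor
      · intro hx
        have h1 : essMap y A' x = some x := by
          rw [← heq]; exact essMap_apply_mem hy hyA hpA hx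
        rw [essMap_eq_some_iff hy' hyA' hpA'] at h1
        rcases h1 with ⟨rfl, h⟩ | ⟨h, _⟩
        · exact absurd h.symm (predF_ne hy)
        · exact h
      · intro hx
        have h1 : essMap y A x = some x := by
          rw [heq]; exact essMap_apply_mem hy' hyA' hpA' hx
        rw [essMap_eq_some_iff hy hyA hpA] at h1
        rcases h1 with ⟨rfl, h⟩ | ⟨h, _⟩
        · exact absurd h.symm (predF_ne hy)
        · exact h
    rw [hAA]
  rw [hST, Set.ncard_image_of_injOn hinj, Set.ncard_coe_finset]
  have hcf := Finset.card_eq_sum_card_fiberwise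
    (f := Prod.fst) (s := T) (t := (Finset.univ : Finset (Fin n)))
    (fun x _ => Finset.mem_univ _)
  rw [hcf]
  have hfiber : ∀ y : Fin n, (T.filter (fun q => q.1 = y)).card =
      if 0 < y.val then Nat.choose (n - 2) (p - 1) else 0 := by
    intro y
    split_ifs with hy
    · have heq : T.filter (fun q => q.1 = y) =
          (Finset.powersetCard (p - 1) ((Finset.univ.erase (predF y)).erase y)).image
            (Prod.mk y) := by
        ext ⟨a, B⟩
        simp only [hT, Finset.mem_filter, Finset.mem_univ, true_and, Finset.mem_image,
          Finset.mem_powersetCard, Finset.subset_erase, Prod.mk.injEq]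
        constructor
        · rintro ⟨⟨_, haB, hpB, hcard⟩, rfl⟩
          exact ⟨B, ⟨⟨⟨fun x _ => Finset.mem_univ x, hpB⟩, haB⟩, hcard⟩, rfl, rfl⟩
        · rintro ⟨A, ⟨⟨⟨_, hpB⟩, haB⟩, hcard⟩, rfl, rfl⟩
          exact ⟨⟨hy, haB, hpB, hcard⟩, rfl⟩
      rw [heq, Finset.card_image_of_injective _ (fun A B h => by simpa using h),
        Finset.card_powersetCard]
      congr 1
      rw [Finset.card_erase_of_mem, Finset.card_erase_of_mem] <;>
        simp [Finset.card_univ, predF_ne hy, (predF_ne hy).symm]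
      omega
    · rw [Finset.filter_eq_empty_iff.2, Finset.card_empty]
      rintro ⟨a, B⟩ hq rfl
      simp only [hT, Finset.mem_filter] at hq
      exact hy hq.2.1
  rw [Finset.sum_congr rfl (fun y _ => hfiber y)]
  rw [← Finset.sum_filter]
  rw [Finset.sum_const, smul_eq_mul]
  congr 1
  have : Finset.univ.filter (fun y : Fin n => 0 < y.val) = Finset.univ.erase ⟨0, hn⟩ := by
    ext y
    simp [Fin.ext_iff]
    omega
  rw [this, Finset.card_erase_of_mem (Finset.mem_univ _), Finset.card_univ, Fintype.card_fin]


end ICCatalan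
end
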